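/- Let A, B, C, D ∈ M₃(ℂ) with tr(A)=tr(B)=tr(C)=tr(D), C = A, D = B, and suppose AX + XB + (AX + XB)ᵀ = tr(EX)·F for all X ∈ M₃(ℂ) and some fixed E, F ∈ M₃(ℂ). Then A = B = 0. -/

import Mathlib

open Matrix

lemma stmt11_aux1 (M : Matrix (Fin 3) (Fin 3) ℂ) (i j k l : Fin 3) :
    (M * Matrix.single i j (1:ℂ)) k l = M k i * (if j = l then 1 else 0) := by
  simp [mul_apply, Matrix.single, ite_and, mul_ite]

lemma stmt11_aux2 (M : Matrix (Fin 3) (Fin 3) ℂ) (i j k l : Fin 3) :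
    (Matrix.single i j (1:ℂ) * M) k l = M j l * (if i = k then 1 else 0) := by
  simp [mul_apply, Matrix.single, ite_and, mul_ite]

lemma stmt11_aux3 (M : Matrix (Fin 3) (Fin 3) ℂ) (i j : Fin 3) :
    (M * Matrix.single i j (1:ℂ)).trace = M j i := by
  simp [Matrix.trace, Matrix.diag, mul_apply, Matrix.single, ite_and, Fin.sum_univ_three]

lemma stmt11_finish (A B : Matrix (Fin 3) (Fin 3) ℂ)
    (h0A : ∀ i j : Fin 3, i ≠ j → A i j = 0) (h0B : ∀ i j : Fin 3, i ≠ j → B i j = 0)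
    (hd : ∀ i j : Fin 3, i ≠ j → A i i + B j j = 0)
    (htr : A.trace = B.trace) : A = 0 ∧ B = 0 := by
  have ht : A 0 0 + A 1 1 + A 2 2 = B 0 0 + B 1 1 + B 2 2 := by
    simpa [Matrix.trace, Matrix.diag, Fin.sum_univ_three] using htr
  have e01 := hd 0 1 (by decide)
  have e02 := hd 0 2 (by decide)
  have e10 := hd 1 0 (by decide)
  have e12 := hd 1 2 (by decide)
  have e21 := hd 2 1 (by decide)
  have h1 : A 1 1 = A 0 0 := by linear_combination e12 - e02
  have h2 : A 2 2 = A 0 0 := by linear_combination e21 - e01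
  have h3 : B 0 0 = -A 0 0 := by linear_combination e10 - h1
  have h4 : B 1 1 = -A 0 0 := by linear_combination e01
  have h5 : B 2 2 = -A 0 0 := by linear_combination e02
  have ha0 : A 0 0 = 0 := by linear_combination (ht - h1 - h2 + h3 + h4 + h5) / 6
  constructor <;> ext i j <;> rcases eq_or_ne i j with rfl | hij
  · fin_cases i <;> simp_all
  · simpa using h0A i j hij
  · fin_cases i <;> simp_all
  · simpa using h0B i j hij

def stmt11P (A B E F : Matrix (Fin 3) (Fin 3) ℂ) : Prop :=
  ∀ i j k l : Fin 3,
      A k i * (if j = l then 1 else 0) + B j l * (if i = k then 1 else 0)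
        + A l i * (if j = k then 1 else 0) + B j k * (if i = l then 1 else 0)
        = E j i * F k l

lemma stmt11_case_off (A B E F : Matrix (Fin 3) (Fin 3) ℂ) (p q m : Fin 3)
    (hpq : p ≠ q) (hpm : p ≠ m) (hqm : q ≠ m)
    (hcov : ∀ x : Fin 3, x = p ∨ x = q ∨ x = m)
    (he : E q p ≠ 0) (P : stmt11P A B E F)
    (htr : A.trace = B.trace) : A = 0 ∧ B = 0 := by
  have hqp := hpq.symm
  have hmp := hpm.symm
  have hmq := hqm.symm
  have hFmm : F m m = 0 := by
    have h1 := P p q m m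
    simp [hpq, hqp, hpm, hmp, hqm, hmq] at h1
    exact h1.resolve_left he
  have hAmp : A m p = 0 := by
    have h1 := P p m m m
    simp [hpq, hqp, hpm, hmp, hqm, hmq, hFmm] at h1
    exact h1
  have hFmq : F m q = 0 := by
    have h1 := P p q m q
    simp [hpq, hqp, hpm, hmp, hqm, hmq, hAmp] at h1
    exact h1.resolve_left he
  have hFqm : F q m = 0 := by
    have h1 := P p q q m
    simp [hpq, hqp, hpm, hmp, hqm, hmq, hAmp] at h1
    exact h1.resolve_left he
  have hBqm : B q m = 0 := by
    have h1 := P m q m m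
    simp [hpq, hqp, hpm, hmp, hqm, hmq, hFmm] at h1
    exact h1
  have hFpm : F p m = 0 := by
    have h1 := P p q p m
    simp [hpq, hqp, hpm, hmp, hqm, hmq, hBqm] at h1
    exact h1.resolve_left he
  have hFmp : F m p = 0 := by
    have h1 := P p q m p
    simp [hpq, hqp, hpm, hmp, hqm, hmq, hBqm] at h1
    exact h1.resolve_left he
  have hAqp : A q p = 0 := by
    have h1 := P p m q m
    simp [hpq, hqp, hpm, hmp, hqm, hmq, hFqm] at h1
    exact h1
  have hBqp : B q p = 0 := by
    have h1 := P m q p m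
    simp [hpq, hqp, hpm, hmp, hqm, hmq, hFpm] at h1
    exact h1
  have hFqq : F q q = 0 := by
    have h1 := P p q q q
    simp [hpq, hqp, hpm, hmp, hqm, hmq, hAqp] at h1
    exact h1.resolve_left he
  have hFpp : F p p = 0 := by
    have h1 := P p q p p
    simp [hpq, hqp, hpm, hmp, hqm, hmq, hBqp] at h1
    exact h1.resolve_left he
  have hApm : A p m = 0 := by
    have h1 := P m p p p
    simp [hpq, hqp, hpm, hmp, hqm, hmq, hFpp] at h1
    exact h1
  have hAqm : A q m = 0 := by
    have h1 := P m q q q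
    simp [hpq, hqp, hpm, hmp, hqm, hmq, hFqq] at h1
    exact h1
  have hApq : A p q = 0 := by
    have h1 := P q m p m
    simp [hpq, hqp, hpm, hmp, hqm, hmq, hFpm] at h1
    exact h1
  have hAmq : A m q = 0 := by
    have h1 := P q p m p
    simp [hpq, hqp, hpm, hmp, hqm, hmq, hFmp] at h1
    exact h1
  have hBpm : B p m = 0 := by
    have h1 := P m p m m
    simp [hpq, hqp, hpm, hmp, hqm, hmq, hFmm] at h1
    exact h1
  have hBmp : B m p = 0 := by
    have h1 := P p m p p
    simp [hpq, hqp, hpm, hmp, hqm, hmq, hFpp] at h1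
    exact h1
  have hBmq : B m q = 0 := by
    have h1 := P q m q q
    simp [hpq, hqp, hpm, hmp, hqm, hmq, hFqq] at h1
    exact h1
  have hBpq : B p q = 0 := by
    have h1 := P q p q q
    simp [hpq, hqp, hpm, hmp, hqm, hmq, hFqq] at h1
    exact h1
  have d1 : A q q + B m m = 0 := by
    have h1 := P q m q m
    simp [hpq, hqp, hpm, hmp, hqm, hmq, hFqm] at h1
    linear_combination h1
  have d2 : A p p + B m m = 0 := by
    have h1 := P p m p m
    simp [hpq, hqp, hpm, hmp, hqm, hmq, hFpm] at h1
    linear_combination h1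
  have d3 : A m m + B p p = 0 := by
    have h1 := P m p m p
    simp [hpq, hqp, hpm, hmp, hqm, hmq, hFmp] at h1
    linear_combination h1
  have d4 : A m m + B q q = 0 := by
    have h1 := P m q m q
    simp [hpq, hqp, hpm, hmp, hqm, hmq, hFmq] at h1
    linear_combination h1
  have d5 : A m m + B m m = 0 := by
    have h1 := P m m m m
    simp [hpq, hqp, hpm, hmp, hqm, hmq, hFmm] at h1
    linear_combination h1 / 2
  apply stmt11_finish A B _ _ _ htr
  · intro i j hij
    rcases hcov i with rfl | rfl | rfl <;> rcases hcov j with rfl | rfl | rfl <;>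
      first | exact absurd rfl hij | assumption
  · intro i j hij
    rcases hcov i with rfl | rfl | rfl <;> rcases hcov j with rfl | rfl | rfl <;>
      first | exact absurd rfl hij | assumption
  · intro i j hij
    rcases hcov i with rfl | rfl | rfl <;> rcases hcov j with rfl | rfl | rfl <;>
      first
        | exact absurd rfl hij
        | linear_combination d1
        | linear_combination d2
        | linear_combination d3
        | linear_combination d4
        | linear_combination d2 + d4 - d5
        | linear_combination d1 + d3 - d5

lemma stmt11_case_diag (A B E F : Matrix (Fin 3) (Fin 3) ℂ) (p q m : Fin 3)
    (hpq : p ≠ q) (hpm : p ≠ m) (hqm : q ≠ m)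
    (hcov : ∀ x : Fin 3, x = p ∨ x = q ∨ x = m)
    (he : E p p ≠ 0) (P : stmt11P A B E F)
    (htr : A.trace = B.trace) : A = 0 ∧ B = 0 := by
  have hqp := hpq.symm
  have hmp := hpm.symm
  have hmq := hqm.symm
  have hFqq : F q q = 0 := by
    have h1 := P p p q q
    simp [hpq, hqp, hpm, hmp, hqm, hmq] at h1
    exact h1.resolve_left he
  have hFqm : F q m = 0 := by
    have h1 := P p p q m
    simp [hpq, hqp, hpm, hmp, hqm, hmq] at h1
    exact h1.resolve_left he
  have hFmq : F m q = 0 := by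
    have h1 := P p p m q
    simp [hpq, hqp, hpm, hmp, hqm, hmq] at h1
    exact h1.resolve_left he
  have hFmm : F m m = 0 := by
    have h1 := P p p m m
    simp [hpq, hqp, hpm, hmp, hqm, hmq] at h1
    exact h1.resolve_left he
  have hAqp : A q p = 0 := by
    have h1 := P p q q q
    simp [hpq, hqp, hpm, hmp, hqm, hmq, hFqq] at h1
    exact h1
  have hAmp : A m p = 0 := by
    have h1 := P p m m m
    simp [hpq, hqp, hpm, hmp, hqm, hmq, hFmm] at h1
    exact h1
  have hBpq : B p q = 0 := by
    have h1 := P q p q q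
    simp [hpq, hqp, hpm, hmp, hqm, hmq, hFqq] at h1
    exact h1
  have hBpm : B p m = 0 := by
    have h1 := P m p m m
    simp [hpq, hqp, hpm, hmp, hqm, hmq, hFmm] at h1
    exact h1
  have hFpq : F p q = 0 := by
    have h1 := P p p p q
    simp [hpq, hqp, hpm, hmp, hqm, hmq, hAqp, hBpq] at h1
    exact h1.resolve_left he
  have hFpm : F p m = 0 := by
    have h1 := P p p p m
    simp [hpq, hqp, hpm, hmp, hqm, hmq, hAmp, hBpm] at h1
    exact h1.resolve_left he
  have hFqp : F q p = 0 := by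
    have h1 := P p p q p
    simp [hpq, hqp, hpm, hmp, hqm, hmq, hAqp, hBpq] at h1
    exact h1.resolve_left he
  have hFmp : F m p = 0 := by
    have h1 := P p p m p
    simp [hpq, hqp, hpm, hmp, hqm, hmq, hAmp, hBpm] at h1
    exact h1.resolve_left he
  have hApq : A p q = 0 := by
    have h1 := P q m p m
    simp [hpq, hqp, hpm, hmp, hqm, hmq, hFpm] at h1
    exact h1
  have hAmq : A m q = 0 := by
    have h1 := P q p m p
    simp [hpq, hqp, hpm, hmp, hqm, hmq, hFmp] at h1
    exact h1
  have hApm : A p m = 0 := by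
    have h1 := P m q p q
    simp [hpq, hqp, hpm, hmp, hqm, hmq, hFpq] at h1
    exact h1
  have hAqm : A q m = 0 := by
    have h1 := P m p q p
    simp [hpq, hqp, hpm, hmp, hqm, hmq, hFqp] at h1
    exact h1
  have hBqp : B q p = 0 := by
    have h1 := P m q m p
    simp [hpq, hqp, hpm, hmp, hqm, hmq, hFmp] at h1
    exact h1
  have hBmp : B m p = 0 := by
    have h1 := P q m q p
    simp [hpq, hqp, hpm, hmp, hqm, hmq, hFqp] at h1
    exact h1
  have hBqm : B q m = 0 := by
    have h1 := P p q p m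
    simp [hpq, hqp, hpm, hmp, hqm, hmq, hFpm] at h1
    exact h1
  have hBmq : B m q = 0 := by
    have h1 := P p m p q
    simp [hpq, hqp, hpm, hmp, hqm, hmq, hFpq] at h1
    exact h1
  have dpq : A p p + B q q = 0 := by
    have h1 := P p q p q
    simp [hpq, hqp, hpm, hmp, hqm, hmq, hFpq] at h1
    linear_combination h1
  have dpm : A p p + B m m = 0 := by
    have h1 := P p m p m
    simp [hpq, hqp, hpm, hmp, hqm, hmq, hFpm] at h1
    linear_combination h1
  have dqp : A q q + B p p = 0 := by
    have h1 := P q p q p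
    simp [hpq, hqp, hpm, hmp, hqm, hmq, hFqp] at h1
    linear_combination h1
  have dqm : A q q + B m m = 0 := by
    have h1 := P q m q m
    simp [hpq, hqp, hpm, hmp, hqm, hmq, hFqm] at h1
    linear_combination h1
  have dmp : A m m + B p p = 0 := by
    have h1 := P m p m p
    simp [hpq, hqp, hpm, hmp, hqm, hmq, hFmp] at h1
    linear_combination h1
  have dmq : A m m + B q q = 0 := by
    have h1 := P m q m q
    simp [hpq, hqp, hpm, hmp, hqm, hmq, hFmq] at h1
    linear_combination h1
  apply stmt11_finish A B _ _ _ htr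
  · intro i j hij
    rcases hcov i with rfl | rfl | rfl <;> rcases hcov j with rfl | rfl | rfl <;>
      first | exact absurd rfl hij | assumption
  · intro i j hij
    rcases hcov i with rfl | rfl | rfl <;> rcases hcov j with rfl | rfl | rfl <;>
      first | exact absurd rfl hij | assumption
  · intro i j hij
    rcases hcov i with rfl | rfl | rfl <;> rcases hcov j with rfl | rfl | rfl <;>
      first
        | exact absurd rfl hij
        | linear_combination dpq
        | linear_combination dpm
        | linear_combination dqp
        | linear_combination dqm
        | linear_combination dmp
        | linear_combination dmq

lemma stmt11_triple : ∀ p : Fin 3, ∃ q m : Fin 3,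
    p ≠ q ∧ p ≠ m ∧ q ≠ m ∧ ∀ x : Fin 3, x = p ∨ x = q ∨ x = m := by decide

lemma stmt11_third : ∀ p q : Fin 3, p ≠ q → ∃ m : Fin 3,
    p ≠ m ∧ q ≠ m ∧ ∀ x : Fin 3, x = p ∨ x = q ∨ x = m := by decide

theorem stmt11 (A B E F : Matrix (Fin 3) (Fin 3) ℂ)
    (htr : A.trace = B.trace)
    (h : ∀ X : Matrix (Fin 3) (Fin 3) ℂ,
      A * X + X * B + (A * X + X * B)ᵀ = (E * X).trace • F) :
    A = 0 ∧ B = 0 := by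
  have P : stmt11P A B E F := by
    intro i j k l
    have h' := congrFun (congrFun (h (Matrix.single i j 1)) k) l
    simp only [Matrix.add_apply, Matrix.transpose_apply, Matrix.smul_apply, smul_eq_mul] at h'
    rw [stmt11_aux1 A i j k l, stmt11_aux1 A i j l k, stmt11_aux2 B i j k l,
      stmt11_aux2 B i j l k, stmt11_aux3 E i j] at h'
    linear_combination h'
  by_cases hE : ∀ a b : Fin 3, E a b = 0
  · apply stmt11_finish A B _ _ _ htr
    · intro i j hij
      have h1 := P j i i i
      simp [hij, hij.symm, hE] at h1
      exact h1
    · intro i j hij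
      have h1 := P j i j j
      simp [hij, hij.symm, hE] at h1
      exact h1
    · intro i j hij
      have h1 := P i j i j
      simp [hij, hij.symm, hE] at h1
      linear_combination h1
  · push_neg at hE
    obtain ⟨a, b, hab⟩ := hE
    rcases eq_or_ne a b with rfl | hne
    · obtain ⟨q, m, h1, h2, h3, h4⟩ := stmt11_triple a
      exact stmt11_case_diag A B E F a q m h1 h2 h3 h4 hab P htr
    · obtain ⟨m, h1, h2, h3⟩ := stmt11_third b a hne.symm
      exact stmt11_case_off A B E F b a m hne.symm h1 h2 h3 hab P htr
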